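/- Let x_k = y_k = k + γ for all k ≥ 1. Define the shifted B-determinants by B_0(m) = y_{m+1}, B_1(m) = x_{m+3}·y_{m+1} − x_{m+1}·y_{m+2}, and B_ℓ(m) = x_{m+ℓ+2}·B_{ℓ-1}(m) − y_{m+ℓ+1}·B_{ℓ-2}(m) for ℓ ≥ 2. Then B_k(m) = m + 1 + γ for all k ≥ 0 and m ≥ 0. -/
import Mathlib


/-- For the shifted Plancherel specialization `x k = y k = k + γ`, the shifted
B-determinants (with `B 0 m = y (m+1)`, `B 1 m = x (m+3) * y (m+1) - x (m+1) * y (m+2)`,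
`B (ℓ+2) m = x (m+ℓ+4) * B (ℓ+1) m - y (m+ℓ+3) * B ℓ m`) satisfy
`B k m = m + 1 + γ` for all `k ≥ 0`, `m ≥ 0`. -/
theorem shifted_plancherel_B (γ : ℝ) (x y : ℕ → ℝ)
    (hx : ∀ k, x k = (k : ℝ) + γ) (hy : ∀ k, y k = (k : ℝ) + γ)
    (B : ℕ → ℕ → ℝ)
    (hB0 : ∀ m, B 0 m = y (m + 1))
    (hB1 : ∀ m, B 1 m = x (m + 3) * y (m + 1) - x (m + 1) * y (m + 2))
    (hBrec : ∀ ℓ m, B (ℓ + 2) m = x (m + ℓ + 4) * B (ℓ + 1) m - y (m + ℓ + 3) * B ℓ m)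
    (k m : ℕ) :
    B k m = (m : ℝ) + 1 + γ := by
  induction k using Nat.strong_induction_on with
  | _ k ih =>
    match k with
    | 0 => rw [hB0, hy]; push_cast; ring
    | 1 => rw [hB1, hx, hx, hy, hy]; push_cast; ring
    | (ℓ + 2) =>
      rw [hBrec, ih ℓ (by omega), ih (ℓ + 1) (by omega), hx, hy]
      push_cast; ring
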